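/- Let p and q be positive integers. The set S_ann-nc(p,q) is invariant under conjugation with γ_ext and with γ_int: if τ ∈ S_ann-nc(p,q) then γ_ext·τ·γ_ext⁻¹ ∈ S_ann-nc(p,q) and γ_int·τ·γ_int⁻¹ ∈ S_ann-nc(p,q). -/

import Mathlib

/-- The permutation induced by `f` on the subset `B`: an element `b` is sent to the first
element of the sequence `f b, f (f b), f (f (f b)), ...` that lies in `B`
(and is left fixed if no iterate ever returns to `B`). -/
noncomputable def induced {α : Type*} (f : α → α) (B : Set α) (b : α) : α := by
  classical
  exact if h : ∃ k, 0 < k ∧ f^[k] b ∈ B then f^[Nat.find h] b else b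

/-- `A` is an orbit of the permutation `τ`. -/
def IsOrbit {α : Type*} (τ : Equiv.Perm α) (A : Set α) : Prop :=
  ∃ a, A = {b | τ.SameCycle a b}

/-- The number of orbits of `τ` (fixed points count as orbits). -/
noncomputable def numOrbits {α : Type*} (τ : Equiv.Perm α) : ℕ :=
  Set.ncard {A : Set α | IsOrbit τ A}

/-- `induced f S` acts on `a, b, c` as the 3-cycle `(a, b, c)`. -/
def MapsCyc3 {α : Type*} (f : α → α) (S : Set α) (a b c : α) : Prop :=
  induced f S a = b ∧ induced f S b = c ∧ induced f S c = a

/-- `induced f S` acts on `a, b, c, d` as the 4-cycle `(a, b, c, d)`. -/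
def MapsCyc4 {α : Type*} (f : α → α) (S : Set α) (a b c d : α) : Prop :=
  induced f S a = b ∧ induced f S b = c ∧ induced f S c = d ∧ induced f S d = a

/-- `induced f S` acts on `a, b, c, d` as the product of transpositions `(a, c)(b, d)`. -/
def MapsSwap2 {α : Type*} (f : α → α) (S : Set α) (a b c d : α) : Prop :=
  induced f S a = c ∧ induced f S c = a ∧ induced f S b = d ∧ induced f S d = b

/-- `induced f S` acts on `x, y` as the transposition `(x, y)`. -/
def MapsSwap {α : Type*} (f : α → α) (S : Set α) (x y : α) : Prop :=
  induced f S x = y ∧ induced f S y = x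

/-- `σ` is standard with respect to the "forward cycle" `γ₀`, i.e. `σ∣B = γ₀∣B` for
every orbit `B` of `σ`. -/
def DiscStandardRel {n : ℕ} (γ₀ σ : Equiv.Perm (Fin n)) : Prop :=
  ∀ A : Set (Fin n), IsOrbit σ A → ∀ b ∈ A, induced (⇑σ) A b = induced (⇑γ₀) A b

/-- The orbit partition of `σ` has no crossing: there are no `a < b < c < d` with
`a, c` in one orbit and `b, d` in a different orbit. -/
def OrbitsNoCrossing {n : ℕ} (σ : Equiv.Perm (Fin n)) : Prop :=
  ¬ ∃ a b c d : Fin n, a < b ∧ b < c ∧ c < d ∧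
      σ.SameCycle a c ∧ σ.SameCycle b d ∧ ¬ σ.SameCycle a b

/-- Disc non-crossing relative to a given forward cycle `γ₀`. -/
def DiscNCRel {n : ℕ} (γ₀ σ : Equiv.Perm (Fin n)) : Prop :=
  DiscStandardRel γ₀ σ ∧ OrbitsNoCrossing σ

/-- The set `S_disc-nc(n)` of disc non-crossing permutations of `[n]`
(here `[n] = {1, …, n}` is modelled by `Fin n`, and the forward cycle
`γ₀ = (1, 2, …, n)` is `finRotate n`). -/
def DiscNC {n : ℕ} (σ : Equiv.Perm (Fin n)) : Prop :=
  DiscNCRel (finRotate n) σ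

/-- The external points `{1, …, p}` (0-indexed: values `< p`). -/
def extSet (p q : ℕ) : Set (Fin (p + q)) := {i | (i : ℕ) < p}

/-- The internal points `{p+1, …, p+q}` (0-indexed: values `≥ p`). -/
def intSet (p q : ℕ) : Set (Fin (p + q)) := {i | p ≤ (i : ℕ)}

/-- `γ_ext = (1, 2, …, p)`, the forward cycle on the external points. -/
def gammaExt (p q : ℕ) : Equiv.Perm (Fin (p + q)) :=
  ((List.finRange (p + q)).take p).formPerm

/-- `γ_int = (p+1, p+2, …, p+q)`, the forward cycle on the internal points. -/
def gammaInt (p q : ℕ) : Equiv.Perm (Fin (p + q)) :=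
  ((List.finRange (p + q)).drop p).formPerm

/-- `γ = γ_ext · γ_int`. -/
def gammaAnn (p q : ℕ) : Equiv.Perm (Fin (p + q)) := gammaExt p q * gammaInt p q

/-- `λ_{x,y}`: the permutation fixing `x` and `y` and cycling the remaining points as
`(γ_ext(x), γ_ext²(x), …, γ_ext^{p-1}(x), γ_int(y), γ_int²(y), …, γ_int^{q-1}(y))`. -/
def lamPerm (p q : ℕ) (x y : Fin (p + q)) : Equiv.Perm (Fin (p + q)) :=
  (((List.range (p - 1)).map fun k => (gammaExt p q ^ (k + 1)) x) ++
    ((List.range (q - 1)).map fun k => (gammaInt p q ^ (k + 1)) y)).formPerm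

/-- `τ` is standard in `(p,q)`-annular sense. -/
def AnnStandard (p q : ℕ) (τ : Equiv.Perm (Fin (p + q))) : Prop :=
  (∀ A : Set (Fin (p + q)), IsOrbit τ A →
    (∀ b ∈ A ∩ extSet p q,
        induced (⇑τ) (A ∩ extSet p q) b = induced (⇑(gammaExt p q)) (A ∩ extSet p q) b) ∧
    (∀ b ∈ A ∩ intSet p q,
        induced (⇑τ) (A ∩ intSet p q) b = induced (⇑(gammaInt p q)) (A ∩ intSet p q) b)) ∧
  (∀ A : Set (Fin (p + q)), IsOrbit τ A →
    (A ∩ extSet p q).Nonempty → (A ∩ intSet p q).Nonempty →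
    (∃! a, a ∈ A ∩ extSet p q ∧ τ a ∈ intSet p q) ∧
    (∃! a, a ∈ A ∩ intSet p q ∧ τ a ∈ extSet p q))

/-- The annular crossing pattern (AC-1). -/
def AC1 (p q : ℕ) (τ : Equiv.Perm (Fin (p + q))) : Prop :=
  ∃ a b c d : Fin (p + q), List.Pairwise (· ≠ ·) [a, b, c, d] ∧
    MapsCyc4 (⇑(gammaAnn p q)) {a, b, c, d} a b c d ∧
    MapsSwap2 (⇑τ) {a, b, c, d} a b c d

/-- The annular crossing pattern (AC-2). -/
def AC2 (p q : ℕ) (τ : Equiv.Perm (Fin (p + q))) : Prop :=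
  ∃ a b c x y : Fin (p + q), List.Pairwise (· ≠ ·) [a, b, c, x, y] ∧
    x ∈ extSet p q ∧ y ∈ intSet p q ∧
    MapsCyc3 (⇑(lamPerm p q x y)) {a, b, c} a b c ∧
    MapsCyc3 (⇑τ) {a, b, c, x, y} a c b ∧
    MapsSwap (⇑τ) {a, b, c, x, y} x y

/-- The annular crossing pattern (AC-3). -/
def AC3 (p q : ℕ) (τ : Equiv.Perm (Fin (p + q))) : Prop :=
  ∃ a b c d x y : Fin (p + q), List.Pairwise (· ≠ ·) [a, b, c, d, x, y] ∧
    x ∈ extSet p q ∧ y ∈ intSet p q ∧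
    MapsCyc4 (⇑(lamPerm p q x y)) {a, b, c, d} a b c d ∧
    MapsSwap2 (⇑τ) {a, b, c, d, x, y} a b c d ∧
    MapsSwap (⇑τ) {a, b, c, d, x, y} x y

/-- The set `S_ann-nc(p,q)` of `(p,q)`-annular non-crossing permutations. -/
def AnnNC (p q : ℕ) (τ : Equiv.Perm (Fin (p + q))) : Prop :=
  AnnStandard p q τ ∧ ¬ AC1 p q τ ∧ ¬ AC2 p q τ ∧ ¬ AC3 p q τ

/-- A `(p,q)`-connecting set: meets both the external and internal points. -/
def ConnectingBlock (p q : ℕ) (B : Set (Fin (p + q))) : Prop :=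
  (B ∩ extSet p q).Nonempty ∧ (B ∩ intSet p q).Nonempty

/-- `τ` is `(p,q)`-connected: it has a `(p,q)`-connecting orbit. -/
def AnnConnected (p q : ℕ) (τ : Equiv.Perm (Fin (p + q))) : Prop :=
  ∃ A : Set (Fin (p + q)), IsOrbit τ A ∧ ConnectingBlock p q A

/-- A family of blocks has no crossing: no `a < b < c < d` with `a, c` in one block and
`b, d` in a different block. -/
def NoCrossing {n : ℕ} (ρ : Set (Set (Fin n))) : Prop :=
  ¬ ∃ (a b c d : Fin n) (B C : Set (Fin n)), B ∈ ρ ∧ C ∈ ρ ∧ B ≠ C ∧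
      a < b ∧ b < c ∧ c < d ∧ a ∈ B ∧ c ∈ B ∧ b ∈ C ∧ d ∈ C


/-! ### Auxiliary lemmas for conjugation invariance -/

theorem Equiv.Perm.apply_inv_self {α : Type*} (f : Equiv.Perm α) (x : α) : f (f⁻¹ x) = x :=
  Equiv.Perm.eq_inv_iff_eq.1 rfl

private lemma iterate_conj {α : Type*} (g σ : Equiv.Perm α) (k : ℕ) (b : α) :
    (⇑(g * σ * g⁻¹))^[k] (g b) = g ((⇑σ)^[k] b) := by
  induction k generalizing b with
  | zero => simp
  | succ k ih =>
    rw [Function.iterate_succ_apply, Function.iterate_succ_apply]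
    have h : (g * σ * g⁻¹) (g b) = g (σ b) := by simp
    rw [h, ih]

private lemma induced_conj {α : Type*} (g σ : Equiv.Perm α) (S : Set α) (b : α) :
    induced ⇑(g * σ * g⁻¹) (g '' S) (g b) = g (induced ⇑σ S b) := by
  classical
  have hiff : ∀ k, (0 < k ∧ (⇑(g * σ * g⁻¹))^[k] (g b) ∈ g '' S) ↔
      (0 < k ∧ (⇑σ)^[k] b ∈ S) := by
    intro k
    rw [iterate_conj, g.injective.mem_set_image]
  unfold induced
  by_cases h : ∃ k, 0 < k ∧ (⇑σ)^[k] b ∈ S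
  · have h' : ∃ k, 0 < k ∧ (⇑(g * σ * g⁻¹))^[k] (g b) ∈ g '' S := by
      obtain ⟨k, hk⟩ := h
      exact ⟨k, (hiff k).2 hk⟩
    rw [dif_pos h', dif_pos h]
    have hfind : Nat.find h' = Nat.find h := by
      apply le_antisymm
      · exact Nat.find_le ((hiff _).2 (Nat.find_spec h))
      · exact Nat.find_le ((hiff _).1 (Nat.find_spec h'))
    rw [hfind, iterate_conj]
  · have h' : ¬ ∃ k, 0 < k ∧ (⇑(g * σ * g⁻¹))^[k] (g b) ∈ g '' S := by
      rintro ⟨k, hk⟩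
      exact h ⟨k, (hiff k).1 hk⟩
    rw [dif_neg h', dif_neg h]

private lemma sameCycle_conj {α : Type*} (g σ : Equiv.Perm α) (a b : α) :
    (g * σ * g⁻¹).SameCycle (g a) (g b) ↔ σ.SameCycle a b := by
  constructor
  · rintro ⟨i, hi⟩
    refine ⟨i, ?_⟩
    rw [conj_zpow] at hi
    simpa using hi
  · rintro ⟨i, hi⟩
    refine ⟨i, ?_⟩
    rw [conj_zpow]
    simp [hi]

private lemma isOrbit_conj_fwd {α : Type*} (g σ : Equiv.Perm α) {A : Set α}
    (h : IsOrbit (g * σ * g⁻¹) A) : ∃ B, IsOrbit σ B ∧ A = g '' B := by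
  obtain ⟨a, rfl⟩ := h
  refine ⟨{b | σ.SameCycle (g⁻¹ a) b}, ⟨g⁻¹ a, rfl⟩, ?_⟩
  ext b
  constructor
  · intro hb
    refine ⟨g⁻¹ b, ?_, g.apply_inv_self b⟩
    have hb' : (g * σ * g⁻¹).SameCycle (g (g⁻¹ a)) (g (g⁻¹ b)) := by
      simpa using hb
    exact (sameCycle_conj g σ _ _).1 hb'
  · rintro ⟨b', hb', rfl⟩
    have := (sameCycle_conj g σ (g⁻¹ a) b').2 hb'
    simpa using this

private lemma formPerm_map' {α : Type*} [DecidableEq α] (g : Equiv.Perm α) :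
    ∀ l : List α, (l.map ⇑g).formPerm = g * l.formPerm * g⁻¹
  | [] => by simp [List.formPerm_nil]
  | [x] => by simp [List.formPerm_singleton]
  | x :: y :: l => by
    rw [List.map_cons, List.map_cons, List.formPerm_cons_cons, List.formPerm_cons_cons,
      ← List.map_cons, formPerm_map' g (y :: l), Equiv.swap_apply_apply]
    group

private lemma conj_eq_self' {α : Type*} {g σ : Equiv.Perm α} (h : Commute g σ) :
    g * σ * g⁻¹ = σ := by
  rw [h.eq, mul_assoc, mul_inv_cancel, mul_one]

private lemma mem_take_iff' (p q : ℕ) (x : Fin (p + q)) :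
    x ∈ (List.finRange (p + q)).take p ↔ (x : ℕ) < p := by
  rw [List.mem_take_iff_getElem]
  constructor
  · rintro ⟨i, hi, rfl⟩
    simpa using lt_of_lt_of_le hi (by simp [min_le_left])
  · intro hx
    refine ⟨(x : ℕ), ?_, by simp⟩
    simp [lt_min_iff, hx, x.isLt]

private lemma mem_drop_iff' (p q : ℕ) (x : Fin (p + q)) :
    x ∈ (List.finRange (p + q)).drop p ↔ p ≤ (x : ℕ) := by
  rw [List.mem_drop_iff_getElem]
  constructor
  · rintro ⟨i, hi, rfl⟩
    simp
  · intro hx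
    refine ⟨(x : ℕ) - p, ?_, ?_⟩
    · simp; omega
    · simp [List.getElem_drop]
      ext
      simp; omega

private lemma gammaExt_mem_ext (p q : ℕ) (x : Fin (p + q)) (hx : x ∈ extSet p q) :
    gammaExt p q x ∈ extSet p q := by
  have := List.formPerm_apply_mem_of_mem ((mem_take_iff' p q x).2 hx)
  exact (mem_take_iff' p q _).1 this

private lemma gammaExt_fix (p q : ℕ) (x : Fin (p + q)) (hx : x ∈ intSet p q) :
    gammaExt p q x = x := by
  apply List.formPerm_apply_of_notMem
  rw [mem_take_iff']
  exact not_lt.2 hx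

private lemma gammaInt_mem_int (p q : ℕ) (x : Fin (p + q)) (hx : x ∈ intSet p q) :
    gammaInt p q x ∈ intSet p q := by
  have := List.formPerm_apply_mem_of_mem ((mem_drop_iff' p q x).2 hx)
  exact (mem_drop_iff' p q _).1 this

private lemma gammaInt_fix (p q : ℕ) (x : Fin (p + q)) (hx : x ∈ extSet p q) :
    gammaInt p q x = x := by
  apply List.formPerm_apply_of_notMem
  rw [mem_drop_iff']
  exact not_le.2 hx

private lemma gammaInt_mem_ext (p q : ℕ) (x : Fin (p + q)) (hx : x ∈ extSet p q) :
    gammaInt p q x ∈ extSet p q := by rw [gammaInt_fix p q x hx]; exact hx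

private lemma gammaExt_mem_int (p q : ℕ) (x : Fin (p + q)) (hx : x ∈ intSet p q) :
    gammaExt p q x ∈ intSet p q := by rw [gammaExt_fix p q x hx]; exact hx

private lemma commute_ext_int (p q : ℕ) : Commute (gammaExt p q) (gammaInt p q) := by
  apply Equiv.Perm.Disjoint.commute
  intro x
  by_cases hx : (x : ℕ) < p
  · right
    exact gammaInt_fix p q x hx
  · left
    exact gammaExt_fix p q x (not_lt.1 hx)

private lemma lamPerm_conj (p q : ℕ) (g : Equiv.Perm (Fin (p + q)))
    (hcE : Commute g (gammaExt p q)) (hcI : Commute g (gammaInt p q)) (x y : Fin (p + q)) :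
    lamPerm p q (g x) (g y) = g * lamPerm p q x y * g⁻¹ := by
  unfold lamPerm
  rw [← formPerm_map', List.map_append, List.map_map, List.map_map]
  congr 2
  · congr 1
    funext k
    simp only [Function.comp_apply]
    have h : g * gammaExt p q ^ (k + 1) = gammaExt p q ^ (k + 1) * g := (hcE.pow_right (k + 1)).eq
    calc (gammaExt p q ^ (k + 1)) (g x) = (gammaExt p q ^ (k + 1) * g) x := rfl
      _ = (g * gammaExt p q ^ (k + 1)) x := by rw [h]
      _ = g ((gammaExt p q ^ (k + 1)) x) := rfl
  · congr 1
    funext k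
    simp only [Function.comp_apply]
    have h : g * gammaInt p q ^ (k + 1) = gammaInt p q ^ (k + 1) * g := (hcI.pow_right (k + 1)).eq
    calc (gammaInt p q ^ (k + 1)) (g y) = (gammaInt p q ^ (k + 1) * g) y := rfl
      _ = (g * gammaInt p q ^ (k + 1)) y := by rw [h]
      _ = g ((gammaInt p q ^ (k + 1)) y) := rfl

private lemma annNC_conj (p q : ℕ) (g : Equiv.Perm (Fin (p + q)))
    (hE : ∀ x, x ∈ extSet p q → g x ∈ extSet p q)
    (hI : ∀ x, x ∈ intSet p q → g x ∈ intSet p q)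
    (hcE : Commute g (gammaExt p q)) (hcI : Commute g (gammaInt p q))
    {τ : Equiv.Perm (Fin (p + q))} (h : AnnNC p q τ) :
    AnnNC p q (g * τ * g⁻¹) := by
  obtain ⟨hstd, hac1, hac2, hac3⟩ := h
  have hEmem : ∀ x, g x ∈ extSet p q ↔ x ∈ extSet p q := by
    intro x
    constructor
    · intro hgx
      by_contra hx
      have hxI : x ∈ intSet p q := by
        simp only [extSet, Set.mem_setOf_eq] at hx
        simpa [intSet] using not_lt.1 hx
      have hgI' := hI x hxI
      simp only [extSet, intSet, Set.mem_setOf_eq] at hgx hgI'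
      omega
    · exact hE x
  have hImem : ∀ x, g x ∈ intSet p q ↔ x ∈ intSet p q := by
    intro x
    constructor
    · intro hgx
      by_contra hx
      have hxE : x ∈ extSet p q := by
        simp only [intSet, Set.mem_setOf_eq] at hx
        simpa [extSet] using not_le.1 hx
      have hgE' := hE x hxE
      simp only [extSet, intSet, Set.mem_setOf_eq] at hgx hgE'
      omega
    · exact hI x
  have hEimg : g '' extSet p q = extSet p q := by
    ext z
    constructor
    · rintro ⟨w, hw, rfl⟩
      exact hE w hw
    · intro hz
      exact ⟨g⁻¹ z, (hEmem _).1 (by rw [g.apply_inv_self]; exact hz), g.apply_inv_self z⟩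
  have hIimg : g '' intSet p q = intSet p q := by
    ext z
    constructor
    · rintro ⟨w, hw, rfl⟩
      exact hI w hw
    · intro hz
      exact ⟨g⁻¹ z, (hImem _).1 (by rw [g.apply_inv_self]; exact hz), g.apply_inv_self z⟩
  have hgE : g * gammaExt p q * g⁻¹ = gammaExt p q := conj_eq_self' hcE
  have hgI : g * gammaInt p q * g⁻¹ = gammaInt p q := conj_eq_self' hcI
  have hgA : g * gammaAnn p q * g⁻¹ = gammaAnn p q := by
    have hx : g * (gammaExt p q * gammaInt p q) * g⁻¹ =
        (g * gammaExt p q * g⁻¹) * (g * gammaInt p q * g⁻¹) := by group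
    rw [gammaAnn, hx, hgE, hgI]
  have key : ∀ (σ : Equiv.Perm (Fin (p + q))) (S : Set (Fin (p + q))) (u v : Fin (p + q)),
      induced ⇑(g * σ * g⁻¹) (g '' S) u = v → induced ⇑σ S (g⁻¹ u) = g⁻¹ v := by
    intro σ S u v huv
    apply g.injective
    rw [← induced_conj g σ S (g⁻¹ u), g.apply_inv_self, g.apply_inv_self]
    exact huv
  have pwinv : ∀ l : List (Fin (p + q)), l.Pairwise (· ≠ ·) →
      (l.map ⇑g⁻¹).Pairwise (· ≠ ·) := by
    intro l hl
    rw [List.pairwise_map]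
    exact hl.imp fun hab => fun he => hab ((g⁻¹ : Equiv.Perm _).injective he)
  have hlam : ∀ x y : Fin (p + q),
      lamPerm p q x y = g * lamPerm p q (g⁻¹ x) (g⁻¹ y) * g⁻¹ := by
    intro x y
    rw [← lamPerm_conj p q g hcE hcI, g.apply_inv_self, g.apply_inv_self]
  refine ⟨⟨?_, ?_⟩, ?_, ?_, ?_⟩
  · -- standardness, part 1
    intro A hA
    obtain ⟨B, hB, rfl⟩ := isOrbit_conj_fwd g τ hA
    have hBE : g '' B ∩ extSet p q = g '' (B ∩ extSet p q) := by
      rw [Set.image_inter g.injective, hEimg]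
    have hBI : g '' B ∩ intSet p q = g '' (B ∩ intSet p q) := by
      rw [Set.image_inter g.injective, hIimg]
    constructor
    · intro b hb
      rw [hBE] at hb ⊢
      obtain ⟨b', hb', rfl⟩ := hb
      rw [induced_conj]
      conv_rhs => rw [← hgE]
      rw [induced_conj]
      exact congrArg g ((hstd.1 B hB).1 b' hb')
    · intro b hb
      rw [hBI] at hb ⊢
      obtain ⟨b', hb', rfl⟩ := hb
      rw [induced_conj]
      conv_rhs => rw [← hgI]
      rw [induced_conj]
      exact congrArg g ((hstd.1 B hB).2 b' hb')
  · -- standardness, part 2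
    intro A hA hne hni
    obtain ⟨B, hB, rfl⟩ := isOrbit_conj_fwd g τ hA
    have hBE : g '' B ∩ extSet p q = g '' (B ∩ extSet p q) := by
      rw [Set.image_inter g.injective, hEimg]
    have hBI : g '' B ∩ intSet p q = g '' (B ∩ intSet p q) := by
      rw [Set.image_inter g.injective, hIimg]
    rw [hBE] at hne
    rw [hBI] at hni
    obtain ⟨⟨a₀, ⟨ha₀m, ha₀c⟩, ha₀u⟩, ⟨b₀, ⟨hb₀m, hb₀c⟩, hb₀u⟩⟩ :=
      hstd.2 B hB hne.of_image hni.of_image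
    constructor
    · refine ⟨g a₀, ⟨?_, ?_⟩, ?_⟩
      · rw [hBE]
        exact Set.mem_image_of_mem g ha₀m
      · have hap : (g * τ * g⁻¹) (g a₀) = g (τ a₀) := by simp
        rw [hap]
        exact hI _ ha₀c
      · rintro z ⟨hzm, hzc⟩
        rw [hBE] at hzm
        obtain ⟨z', hz', rfl⟩ := hzm
        have hap : (g * τ * g⁻¹) (g z') = g (τ z') := by simp
        rw [hap] at hzc
        exact congrArg g (ha₀u z' ⟨hz', (hImem _).1 hzc⟩)
    · refine ⟨g b₀, ⟨?_, ?_⟩, ?_⟩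
      · rw [hBI]
        exact Set.mem_image_of_mem g hb₀m
      · have hap : (g * τ * g⁻¹) (g b₀) = g (τ b₀) := by simp
        rw [hap]
        exact hE _ hb₀c
      · rintro z ⟨hzm, hzc⟩
        rw [hBI] at hzm
        obtain ⟨z', hz', rfl⟩ := hzm
        have hap : (g * τ * g⁻¹) (g z') = g (τ z') := by simp
        rw [hap] at hzc
        exact congrArg g (hb₀u z' ⟨hz', (hEmem _).1 hzc⟩)
  · -- ¬ AC1
    intro hc
    apply hac1
    obtain ⟨a, b, c, d, hpw, h4, hs⟩ := hc
    have hset : ({a, b, c, d} : Set (Fin (p + q))) = g '' {g⁻¹ a, g⁻¹ b, g⁻¹ c, g⁻¹ d} := by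
      simp [Set.image_insert_eq]
    rw [hset, ← hgA] at h4
    rw [hset] at hs
    refine ⟨g⁻¹ a, g⁻¹ b, g⁻¹ c, g⁻¹ d, ?_, ?_, ?_⟩
    · exact pwinv [a, b, c, d] hpw
    · exact ⟨key _ _ _ _ h4.1, key _ _ _ _ h4.2.1, key _ _ _ _ h4.2.2.1, key _ _ _ _ h4.2.2.2⟩
    · exact ⟨key _ _ _ _ hs.1, key _ _ _ _ hs.2.1, key _ _ _ _ hs.2.2.1, key _ _ _ _ hs.2.2.2⟩
  · -- ¬ AC2
    intro hc
    apply hac2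
    obtain ⟨a, b, c, x, y, hpw, hx, hy, hlm, h3, hsw⟩ := hc
    have hset3 : ({a, b, c} : Set (Fin (p + q))) = g '' {g⁻¹ a, g⁻¹ b, g⁻¹ c} := by
      simp [Set.image_insert_eq]
    have hset5 : ({a, b, c, x, y} : Set (Fin (p + q))) =
        g '' {g⁻¹ a, g⁻¹ b, g⁻¹ c, g⁻¹ x, g⁻¹ y} := by
      simp [Set.image_insert_eq]
    rw [hset3, hlam x y] at hlm
    rw [hset5] at h3 hsw
    refine ⟨g⁻¹ a, g⁻¹ b, g⁻¹ c, g⁻¹ x, g⁻¹ y, ?_, ?_, ?_, ?_, ?_, ?_⟩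
    · exact pwinv [a, b, c, x, y] hpw
    · exact (hEmem _).1 (by rw [g.apply_inv_self]; exact hx)
    · exact (hImem _).1 (by rw [g.apply_inv_self]; exact hy)
    · exact ⟨key _ _ _ _ hlm.1, key _ _ _ _ hlm.2.1, key _ _ _ _ hlm.2.2⟩
    · exact ⟨key _ _ _ _ h3.1, key _ _ _ _ h3.2.1, key _ _ _ _ h3.2.2⟩
    · exact ⟨key _ _ _ _ hsw.1, key _ _ _ _ hsw.2⟩
  · -- ¬ AC3
    intro hc
    apply hac3
    obtain ⟨a, b, c, d, x, y, hpw, hx, hy, hlm, hs2, hsw⟩ := hc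
    have hset4 : ({a, b, c, d} : Set (Fin (p + q))) = g '' {g⁻¹ a, g⁻¹ b, g⁻¹ c, g⁻¹ d} := by
      simp [Set.image_insert_eq]
    have hset6 : ({a, b, c, d, x, y} : Set (Fin (p + q))) =
        g '' {g⁻¹ a, g⁻¹ b, g⁻¹ c, g⁻¹ d, g⁻¹ x, g⁻¹ y} := by
      simp [Set.image_insert_eq]
    rw [hset4, hlam x y] at hlm
    rw [hset6] at hs2 hsw
    refine ⟨g⁻¹ a, g⁻¹ b, g⁻¹ c, g⁻¹ d, g⁻¹ x, g⁻¹ y, ?_, ?_, ?_, ?_, ?_, ?_⟩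
    · exact pwinv [a, b, c, d, x, y] hpw
    · exact (hEmem _).1 (by rw [g.apply_inv_self]; exact hx)
    · exact (hImem _).1 (by rw [g.apply_inv_self]; exact hy)
    · exact ⟨key _ _ _ _ hlm.1, key _ _ _ _ hlm.2.1, key _ _ _ _ hlm.2.2.1, key _ _ _ _ hlm.2.2.2⟩
    · exact ⟨key _ _ _ _ hs2.1, key _ _ _ _ hs2.2.1, key _ _ _ _ hs2.2.2.1, key _ _ _ _ hs2.2.2.2⟩
    · exact ⟨key _ _ _ _ hsw.1, key _ _ _ _ hsw.2⟩

/-- Lemma 5.2 1°: `S_ann-nc(p,q)` is invariant under conjugation with `γ_ext` and with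
`γ_int`. -/
theorem stmt_12 (p q : ℕ) (hp : 0 < p) (hq : 0 < q)
    (τ : Equiv.Perm (Fin (p + q))) (h : AnnNC p q τ) :
    AnnNC p q (gammaExt p q * τ * (gammaExt p q)⁻¹) ∧
    AnnNC p q (gammaInt p q * τ * (gammaInt p q)⁻¹) := by
  constructor
  · exact annNC_conj p q (gammaExt p q) (gammaExt_mem_ext p q) (gammaExt_mem_int p q)
      (Commute.refl _) (commute_ext_int p q) h
  · exact annNC_conj p q (gammaInt p q) (gammaInt_mem_ext p q) (gammaInt_mem_int p q)
      ((commute_ext_int p q).symm) (Commute.refl _) h
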